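/- Let ρ : ℤ → ℝ satisfy ρ₀ < 0, ρ_k > 0 for all k ≠ 0, and ρ₀ + ρ₂ < 0, and set λ* = √(−ρ₁(ρ₀ + ρ₂)) > 0. Then for all integers m ≤ 0 and n ≥ 2, the matrix A_m^n has a real eigenvalue λ with λ ≥ λ*. In particular A_m^n has an eigenvalue with positive real part bounded below by λ*, uniformly in the truncation parameters m and n. -/

import Mathlib

/-- The tridiagonal matrix `A_m^n` indexed by `{m, …, n} ⊆ ℤ`, with
superdiagonal entries `(A)_{k,k+1} = ρ_{k+1}`, subdiagonal entries
`(A)_{k,k-1} = -ρ_{k-1}`, and zero diagonal. -/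
def triA (ρ : ℤ → ℝ) (m n : ℤ) :
    Matrix ↥(Finset.Icc m n) ↥(Finset.Icc m n) ℝ :=
  fun i j =>
    if (j : ℤ) = (i : ℤ) + 1 then ρ ((i : ℤ) + 1)
    else if (j : ℤ) = (i : ℤ) - 1 then -ρ ((i : ℤ) - 1)
    else 0

/-- The characteristic polynomial `P_m^n(x) = det(xI - A_m^n)`. -/
noncomputable def triP (ρ : ℤ → ℝ) (m n : ℤ) (x : ℝ) : ℝ :=
  (x • (1 : Matrix ↥(Finset.Icc m n) ↥(Finset.Icc m n) ℝ) - triA ρ m n).det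


private lemma myVal_succAbove {N : ℕ} (p : Fin (N+1)) (i : Fin N) :
    ((p.succAbove i : Fin (N+1)) : ℕ) = if (i:ℕ) < (p:ℕ) then (i:ℕ) else (i:ℕ)+1 := by
  rw [Fin.succAbove]
  split_ifs with h1 h2 h2
  · rfl
  · exact absurd (by exact_mod_cast h1) h2
  · exact absurd (Fin.lt_def.mpr (by exact_mod_cast h2)) h1
  · rfl

/-- Tridiagonal matrix over `Fin N`. -/
def triT (d a b : ℕ → ℝ) (N : ℕ) : Matrix (Fin N) (Fin N) ℝ :=
  Matrix.of fun i j =>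
    if (j:ℕ) = (i:ℕ)+1 then a i
    else if (i:ℕ) = (j:ℕ)+1 then b j
    else if (i:ℕ) = (j:ℕ) then d i else 0

/-- Continuant recurrence for tridiagonal determinants. -/
def triE (d a b : ℕ → ℝ) : ℕ → ℝ
  | 0 => 1
  | 1 => d 0
  | (N+2) => d (N+1) * triE d a b (N+1) - a N * b N * triE d a b N

lemma triT_det (d a b : ℕ → ℝ) : ∀ N, (triT d a b N).det = triE d a b N := by
  intro N
  induction N using Nat.twoStepInduction with
  | zero => simp [triE, Matrix.det_fin_zero]
  | one => simp [triE, Matrix.det_fin_one, triT]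
  | more N ih0 ih1 =>
    set M := triT d a b (N+2) with hM
    rw [Matrix.det_succ_row M (Fin.last (N+1))]
    rw [Fin.sum_univ_castSucc, Fin.sum_univ_castSucc]
    have h1 : ∀ i : Fin N, M (Fin.last (N+1)) i.castSucc.castSucc = 0 := by
      intro i
      have hi := i.isLt
      simp only [hM, triT, Matrix.of_apply, Fin.coe_castSucc, Fin.val_last]
      split_ifs <;> first | rfl | omega
    have h2 : ∑ i : Fin N,
        (-1:ℝ) ^ ((Fin.last (N + 1) : ℕ) + (i.castSucc.castSucc : ℕ)) *
          M (Fin.last (N + 1)) i.castSucc.castSucc *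
          (M.submatrix (Fin.last (N + 1)).succAbove i.castSucc.castSucc.succAbove).det = 0 :=
      Finset.sum_eq_zero fun i _ => by rw [h1 i]; ring
    rw [h2, zero_add]
    have hent3 : M (Fin.last (N+1)) (Fin.last (N+1)) = d (N+1) := by
      simp only [hM, triT, Matrix.of_apply, Fin.val_last]
      split_ifs <;> first | rfl | omega
    have hminor3 : M.submatrix (Fin.last (N+1)).succAbove (Fin.last (N+1)).succAbove
        = triT d a b (N+1) := by
      rw [Fin.succAbove_last]
      ext i j
      simp only [hM, Matrix.submatrix_apply, triT, Matrix.of_apply, Fin.coe_castSucc]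
    have hent2 : M (Fin.last (N+1)) (Fin.last N).castSucc = b N := by
      simp only [hM, triT, Matrix.of_apply, Fin.coe_castSucc, Fin.val_last]
      split_ifs <;> first | rfl | omega
    have hminor2 : (M.submatrix (Fin.last (N+1)).succAbove
        ((Fin.last N).castSucc).succAbove).det = a N * triE d a b N := by
      rw [Fin.succAbove_last]
      rw [Matrix.det_succ_column _ (Fin.last N)]
      rw [Fin.sum_univ_castSucc]
      have hc1 : ∀ i : Fin N, (M.submatrix Fin.castSucc ((Fin.last N).castSucc).succAbove)
          i.castSucc (Fin.last N) = 0 := by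
        intro i
        have hi := i.isLt
        simp only [hM, Matrix.submatrix_apply, triT, Matrix.of_apply, Fin.coe_castSucc,
          Fin.val_last, myVal_succAbove, lt_irrefl, if_false]
        split_ifs <;> first | rfl | omega
      have hz : ∑ i : Fin N,
          (-1:ℝ) ^ ((i.castSucc : ℕ) + (Fin.last N : ℕ)) *
            (M.submatrix Fin.castSucc ((Fin.last N).castSucc).succAbove) i.castSucc (Fin.last N) *
            ((M.submatrix Fin.castSucc ((Fin.last N).castSucc).succAbove).submatrix
              i.castSucc.succAbove (Fin.last N).succAbove).det = 0 :=
        Finset.sum_eq_zero fun i _ => by rw [hc1 i]; ring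
      rw [hz, zero_add]
      have hent : (M.submatrix Fin.castSucc ((Fin.last N).castSucc).succAbove)
          (Fin.last N) (Fin.last N) = a N := by
        simp only [hM, Matrix.submatrix_apply, triT, Matrix.of_apply, Fin.coe_castSucc,
          Fin.val_last, myVal_succAbove, lt_irrefl, if_false]
        split_ifs <;> first | rfl | omega
      have hinner : ((M.submatrix Fin.castSucc ((Fin.last N).castSucc).succAbove).submatrix
          (Fin.last N).succAbove (Fin.last N).succAbove) = triT d a b N := by
        rw [Fin.succAbove_last]
        ext i j
        have hj := j.isLt
        simp only [hM, Matrix.submatrix_apply, triT, Matrix.of_apply, Fin.coe_castSucc,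
          myVal_succAbove, Fin.val_last]
        simp [hj]
      rw [hent, hinner, ih0]
      have : ((Fin.last N : ℕ) + (Fin.last N : ℕ)) = 2 * N := by simp [Fin.val_last]; ring
      rw [this]
      simp [pow_mul]
    rw [hent3, hminor3, hent2, hminor2, ih1]
    have hs1 : ((Fin.last (N+1) : ℕ) + ((Fin.last N).castSucc : ℕ)) = 2*N+1 := by
      simp [Fin.val_last, Fin.coe_castSucc]; ring
    have hs2 : ((Fin.last (N+1) : ℕ) + (Fin.last (N+1) : ℕ)) = 2*(N+1) := by
      simp [Fin.val_last]; ring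
    rw [hs1, hs2]
    simp only [pow_succ, pow_mul, neg_one_sq, one_pow, one_mul, mul_one]
    show _ = triE d a b (N+2)
    simp only [triE]
    ring

noncomputable def Dq (c : ℕ → ℝ) (x : ℝ) : ℕ → ℝ
  | 0 => 1
  | 1 => x
  | (N+2) => x * Dq c x (N+1) + c N * Dq c x N

lemma Dq_zero (c : ℕ → ℝ) (x : ℝ) : Dq c x 0 = 1 := rfl
lemma Dq_one (c : ℕ → ℝ) (x : ℝ) : Dq c x 1 = x := rfl
lemma Dq_succ2 (c : ℕ → ℝ) (x : ℝ) (N : ℕ) :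
    Dq c x (N+2) = x * Dq c x (N+1) + c N * Dq c x N := rfl

lemma triE_eq_Dq (a b : ℕ → ℝ) (x : ℝ) : ∀ N,
    triE (fun _ => x) a b N = Dq (fun k => -(a k * b k)) x N := by
  intro N
  induction N using Nat.twoStepInduction with
  | zero => rfl
  | one => rfl
  | more N ih0 ih1 =>
    show triE _ a b (N+2) = Dq _ x (N+2)
    rw [Dq_succ2, ← ih0, ← ih1]
    show _ * _ - _ = _
    ring

lemma Dq_continuous (c : ℕ → ℝ) (N : ℕ) : Continuous fun x => Dq c x N := by
  induction N using Nat.twoStepInduction with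
  | zero => simpa [Dq_zero] using continuous_const
  | one => exact (continuous_id : Continuous fun x : ℝ => x)
  | more N ih0 ih1 =>
    have : (fun x => Dq c x (N+2)) = fun x => x * Dq c x (N+1) + c N * Dq c x N := by
      funext x; rw [Dq_succ2]
    rw [this]
    exact (continuous_id.mul ih1).add (continuous_const.mul ih0)

lemma Dq_big (c : ℕ → ℝ) (C : ℝ) (hC : 0 ≤ C) (Nmax : ℕ)
    (hc : ∀ k, k < Nmax → |c k| ≤ C) (x : ℝ) (hx : 1 + C ≤ x) :
    ∀ N, N ≤ Nmax → 1 ≤ Dq c x N ∧ Dq c x N ≤ Dq c x (N+1) := by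
  intro N
  induction N with
  | zero =>
    intro _
    refine ⟨le_refl _, ?_⟩
    rw [Dq_zero, Dq_one]; linarith
  | succ N ih =>
    intro hN
    obtain ⟨h1, h2⟩ := ih (by omega)
    have h1' : 1 ≤ Dq c x (N+1) := le_trans h1 h2
    refine ⟨h1', ?_⟩
    rw [Dq_succ2]
    have hck := abs_le.1 (hc N (by omega))
    nlinarith [hck.1, hck.2, h1, h2, h1']

lemma triP_eq (ρ : ℤ → ℝ) (m n : ℤ) (h : m ≤ n) (x : ℝ) :
    triP ρ m n x = (triT (fun _ => x) (fun k => -ρ (m + k + 1)) (fun k => ρ (m + k))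
      ((n + 1 - m).toNat)).det := by
  set N := (n + 1 - m).toNat with hN
  have hNz : (N : ℤ) = n + 1 - m := Int.toNat_of_nonneg (by omega)
  have hmem : ∀ i : Fin N, m + (i : ℤ) ∈ Finset.Icc m n := by
    intro i
    have := i.isLt
    have : ((i : ℕ) : ℤ) < (N : ℤ) := by exact_mod_cast this
    simp only [Finset.mem_Icc]
    omega
  let e : Fin N ≃ ↥(Finset.Icc m n) :=
    { toFun := fun i => ⟨m + (i : ℤ), hmem i⟩
      invFun := fun k => ⟨((k : ℤ) - m).toNat, by
        have hk := k.2
        simp only [Finset.mem_Icc] at hk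
        have : (((k : ℤ) - m).toNat : ℤ) = (k : ℤ) - m := Int.toNat_of_nonneg (by omega)
        omega⟩
      left_inv := by
        intro i
        ext
        simp
      right_inv := by
        intro k
        have hk := k.2
        simp only [Finset.mem_Icc] at hk
        ext
        simp only
        have : (((k : ℤ) - m).toNat : ℤ) = (k : ℤ) - m := Int.toNat_of_nonneg (by omega)
        push_cast [this]
        omega }
  rw [triP, ← Matrix.det_submatrix_equiv_self e]
  congr 1
  ext i j
  have hi : ((e i : ↥(Finset.Icc m n)) : ℤ) = m + (i : ℤ) := rfl
  have hj : ((e j : ↥(Finset.Icc m n)) : ℤ) = m + (j : ℤ) := rfl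
  simp only [Matrix.submatrix_apply, Matrix.sub_apply, Matrix.smul_apply, Matrix.one_apply,
    triA, triT, Matrix.of_apply, smul_eq_mul]
  have hije : (e i = e j) ↔ ((i : ℕ) = (j : ℕ)) := by
    constructor
    · intro hh
      have h2 : ((e i : ↥(Finset.Icc m n)) : ℤ) = ((e j : ↥(Finset.Icc m n)) : ℤ) := by rw [hh]
      rw [hi, hj] at h2
      omega
    · intro hh
      exact congrArg e (Fin.ext hh)
  rw [hi, hj]
  simp only [hije]
  split_ifs
  all_goals try (exfalso; omega)
  all_goals try ring1
  rw [show m + (i : ℤ) - 1 = m + (j : ℤ) from by omega]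
  ring

/-- `triP` in terms of the scalar recurrence. -/
lemma triP_eq_Dq (ρ : ℤ → ℝ) (m n : ℤ) (h : m ≤ n) (x : ℝ) :
    triP ρ m n x = Dq (fun k => ρ (m + k) * ρ (m + k + 1)) x ((n + 1 - m).toNat) := by
  rw [triP_eq ρ m n h x, triT_det, triE_eq_Dq]
  congr 1
  funext k
  ring

/-- If `ρ₀ < 0`, `ρ_k > 0` for `k ≠ 0`, and `ρ₀ + ρ₂ < 0`, then with
`λ* = √(-ρ₁(ρ₀ + ρ₂)) > 0`, every truncation `A_m^n` with `m ≤ 0 ≤ 2 ≤ n` has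
a real eigenvalue `λ ≥ λ*`: a uniform positive lower bound on an unstable
eigenvalue, independent of the truncation parameters. -/
theorem truncation_has_real_eigenvalue_ge_lambda_star
    (ρ : ℤ → ℝ) (h0 : ρ 0 < 0) (hk : ∀ k : ℤ, k ≠ 0 → 0 < ρ k)
    (h02 : ρ 0 + ρ 2 < 0) :
    0 < Real.sqrt (-(ρ 1) * (ρ 0 + ρ 2))
    ∧ ∀ m n : ℤ, m ≤ 0 → 2 ≤ n →
        ∃ lam : ℝ, Real.sqrt (-(ρ 1) * (ρ 0 + ρ 2)) ≤ lam ∧ triP ρ m n lam = 0 := by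
  have hr1 : 0 < ρ 1 := hk 1 one_ne_zero
  have hr2 : 0 < ρ 2 := hk 2 (by norm_num)
  have hrm1 : 0 < ρ (-1) := hk (-1) (by norm_num)
  have hprod : 0 < -(ρ 1) * (ρ 0 + ρ 2) := mul_pos_of_neg_of_neg (by linarith) h02
  set x := Real.sqrt (-(ρ 1) * (ρ 0 + ρ 2)) with hxdef
  have hx : 0 < x := Real.sqrt_pos.mpr hprod
  refine ⟨hx, ?_⟩
  intro m n hm hn
  have hx2 : x * x = -(ρ 1) * (ρ 0 + ρ 2) := Real.mul_self_sqrt hprod.le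
  have hx2' : x * x = -(ρ 0 * ρ 1) - ρ 1 * ρ 2 := by rw [hx2]; ring
  set c : ℕ → ℝ := fun k => ρ (m + k) * ρ (m + k + 1) with hc
  set q : ℕ := (-m).toNat with hq
  have hqm : (q : ℤ) = -m := Int.toNat_of_nonneg (by omega)
  set Ntot : ℕ := (n + 1 - m).toNat with hNtot
  -- positivity of coefficients away from the defective site
  have hcpos_low : ∀ k : ℕ, (k : ℤ) + 2 ≤ (q : ℤ) → 0 < c k := by
    intro k hk2
    exact mul_pos (hk (m + k) (by omega)) (hk (m + k + 1) (by omega))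
  have hcpos_high : ∀ k : ℕ, (q : ℤ) + 1 ≤ (k : ℤ) → 0 < c k := by
    intro k hk2
    exact mul_pos (hk (m + k) (by omega)) (hk (m + k + 1) (by omega))
  -- positivity of Dq below the defective site
  have haux : ∀ k : ℕ, k + 1 ≤ q → 0 < Dq c x k ∧ 0 < Dq c x (k + 1) := by
    intro k
    induction k with
    | zero =>
      intro _
      exact ⟨by rw [Dq_zero]; norm_num, by rw [Dq_one]; exact hx⟩
    | succ k ih =>
      intro hk1
      obtain ⟨hD0, hD1⟩ := ih (by omega)
      refine ⟨hD1, ?_⟩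
      rw [show k + 1 + 1 = k + 2 from rfl, Dq_succ2]
      have hck : 0 < c k := hcpos_low k (by push_cast; omega)
      exact add_pos (mul_pos hx hD1) (mul_pos hck hD0)
  have hDq_pos : 0 < Dq c x q := by
    rcases Nat.eq_zero_or_pos q with hq0 | hq0
    · rw [hq0, Dq_zero]; norm_num
    · obtain ⟨t, hqt⟩ : ∃ t, q = t + 1 := ⟨q - 1, by omega⟩
      rw [hqt]
      exact (haux t (by omega)).2
  set Bv : ℝ := if q = 0 then 0 else Dq c x (q - 1) with hBvdef
  have hBv : 0 ≤ Bv := by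
    by_cases hq0 : q = 0
    · rw [hBvdef, if_pos hq0]
    · rw [hBvdef, if_neg hq0]
      exact (haux (q - 1) (by omega)).1.le
  have hrecq1 : Dq c x (q + 1) = x * Dq c x q + (ρ (-1) * ρ 0) * Bv := by
    by_cases hq0 : q = 0
    · rw [hBvdef, if_pos hq0, hq0, Dq_one, Dq_zero]; ring
    · obtain ⟨t, hqt⟩ : ∃ t, q = t + 1 := ⟨q - 1, by omega⟩
      have hqtz : (q : ℤ) = (t : ℤ) + 1 := by exact_mod_cast congrArg (Nat.cast : ℕ → ℤ) hqt
      have e1 : m + (t : ℤ) = -1 := by omega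
      have e2 : m + (t : ℤ) + 1 = 0 := by omega
      have hct : c t = ρ (-1) * ρ 0 := by
        simp only [hc, e1, e2]
        norm_num
      rw [hBvdef, if_neg hq0, hqt]
      rw [show t + 1 + 1 = t + 2 from rfl, Dq_succ2, hct]
      norm_num
  have hrecq2 : Dq c x (q + 2) = x * Dq c x (q + 1) + (ρ 0 * ρ 1) * Dq c x q := by
    rw [Dq_succ2]
    have e1 : m + (q : ℤ) = 0 := by omega
    have e2 : m + (q : ℤ) + 1 = 1 := by omega
    have hcq : c q = ρ 0 * ρ 1 := by
      simp only [hc, e1, e2]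
      norm_num
    rw [hcq]
  have hrecq3 : Dq c x (q + 3) = x * Dq c x (q + 2) + (ρ 1 * ρ 2) * Dq c x (q + 1) := by
    rw [show q + 3 = (q + 1) + 2 from rfl, Dq_succ2]
    have e1 : m + ((q : ℤ) + 1) = 1 := by omega
    have e2 : m + ((q : ℤ) + 1) + 1 = 2 := by omega
    have hcq : c (q + 1) = ρ 1 * ρ 2 := by
      simp only [hc, Nat.cast_add, Nat.cast_one, e1, e2]
      norm_num
    rw [hcq]
  -- sign analysis at x = λ*
  have hD2 : Dq c x (q + 2) < 0 := by
    have hexp : Dq c x (q + 2) = -(ρ 1 * ρ 2) * Dq c x q + x * (ρ (-1) * ρ 0) * Bv := by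
      rw [hrecq2, hrecq1]
      linear_combination Dq c x q * hx2'
    rw [hexp]
    nlinarith [mul_pos (mul_pos hr1 hr2) hDq_pos,
      mul_nonneg (mul_nonneg hx.le hrm1.le) hBv]
  have hD3eq : Dq c x (q + 3) = -(ρ 0 * ρ 0 * ρ 1 * ρ (-1)) * Bv := by
    rw [hrecq3, hrecq2, hrecq1]
    linear_combination (x * Dq c x q + ρ (-1) * ρ 0 * Bv) * hx2'
  have hD3 : Dq c x (q + 3) ≤ 0 := by
    rw [hD3eq]
    have : 0 ≤ ρ 0 * ρ 0 * ρ 1 * ρ (-1) * Bv :=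
      mul_nonneg (mul_nonneg (mul_nonneg (mul_self_nonneg (ρ 0)) hr1.le) hrm1.le) hBv
    linarith
  have hstep : ∀ k : ℕ, 0 < c (q + 2 + k) := fun k => hcpos_high _ (by push_cast; omega)
  have hD4 : Dq c x (q + 4) ≤ 0 := by
    rw [show q + 4 = (q + 2) + 2 from rfl, Dq_succ2]
    have hc2 := hstep 0
    rw [show q + 2 + 0 = q + 2 from rfl] at hc2
    nlinarith [mul_nonneg hx.le (neg_nonneg.2 hD3), mul_nonneg hc2.le (neg_nonneg.2 hD2.le)]
  have hneg : ∀ k : ℕ, Dq c x (q + 3 + k) ≤ 0 ∧ Dq c x (q + 4 + k) ≤ 0 := by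
    intro k
    induction k with
    | zero => exact ⟨hD3, hD4⟩
    | succ k ih =>
      obtain ⟨ih1, ih2⟩ := ih
      have e2 : q + 4 + k = (q + 3 + k) + 1 := by omega
      rw [e2] at ih2
      constructor
      · rw [show q + 3 + (k + 1) = (q + 3 + k) + 1 from by omega]
        rw [← e2]
        rw [e2]
        exact ih2
      · rw [show q + 4 + (k + 1) = (q + 3 + k) + 2 from by omega, Dq_succ2]
        have hcp := hstep (k + 1)
        rw [show q + 2 + (k + 1) = q + 3 + k from by omega] at hcp
        nlinarith [mul_nonneg hx.le (neg_nonneg.2 ih2), mul_nonneg hcp.le (neg_nonneg.2 ih1)]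
  have hfinal_neg : Dq c x Ntot ≤ 0 := by
    have hNeq : Ntot = q + 3 + (n - 2).toNat := by omega
    rw [hNeq]
    exact (hneg _).1
  -- large x positivity and IVT
  set C : ℝ := ∑ k ∈ Finset.range Ntot, |c k| with hCdef
  have hC0 : 0 ≤ C := Finset.sum_nonneg fun _ _ => abs_nonneg _
  have hCk : ∀ k, k < Ntot → |c k| ≤ C := fun k hk' =>
    Finset.single_le_sum (fun i _ => abs_nonneg (c i)) (Finset.mem_range.mpr hk')
  set y : ℝ := max x (1 + C) with hydef
  have hy : 1 + C ≤ y := le_max_right _ _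
  have hxy : x ≤ y := le_max_left _ _
  have hDy : 1 ≤ Dq c y Ntot := (Dq_big c C hC0 Ntot hCk y hy Ntot le_rfl).1
  have hcont : ContinuousOn (fun t => Dq c t Ntot) (Set.Icc x y) :=
    (Dq_continuous c Ntot).continuousOn
  have h0mem : (0 : ℝ) ∈ Set.Icc (Dq c x Ntot) (Dq c y Ntot) := ⟨hfinal_neg, by linarith⟩
  obtain ⟨lam, hlam, hlam0⟩ := intermediate_value_Icc hxy hcont h0mem
  refine ⟨lam, hlam.1, ?_⟩
  rw [triP_eq_Dq ρ m n (by omega) lam]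
  exact hlam0
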